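/- arXiv:2409.19229 — 3 statements merged into one kernel-verified Lean document; each statement's English description precedes it below -/
import Mathlib

section
/- Let α be a well-ordered type (a linear order whose strict order is well-founded) and let G be a countable linearly ordered group whose underlying linear order is order-isomorphic to the lexicographic product ℤ^α·ℚ (ℚ-coordinate dominant). Then there exists a set S of Archimedean equivalence classes of non-identity elements of G such that S is downward closed with respect to the induced order ≪ on classes and S, ordered by ≪, is order-isomorphic to α. In particular, the largest well-ordered initial segment of the order of Archimedean classes of non-identity elements of G has order type β ≥ α. -/
/-- `|g| = g` if `g ≥ e`, and `|g| = g⁻¹` otherwise. -/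
def oabs {G : Type*} [Group G] [LinearOrder G] (g : G) : G :=
  if 1 ≤ g then g else g⁻¹

/-- `g` is Archimedean less than `h`: `|gⁿ| < |h|` for every natural number `n`. -/
def ArchLT {G : Type*} [Group G] [LinearOrder G] (g h : G) : Prop :=
  ∀ n : ℕ, oabs (g ^ n) < oabs h

/-- `g` and `h` are Archimedean equivalent: there are `n, m` with
`|gⁿ| ≥ |h|` and `|hᵐ| ≥ |g|`. -/
def ArchEquiv {G : Type*} [Group G] [LinearOrder G] (g h : G) : Prop :=
  ∃ n m : ℕ, oabs h ≤ oabs (g ^ n) ∧ oabs g ≤ oabs (h ^ m)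

/-- Archimedean equivalence classes of the non-identity elements of `G`. -/
def NzArchClasses (G : Type*) [Group G] [LinearOrder G] :=
  Quot (fun g h : {x : G // x ≠ 1} => ArchEquiv g.1 h.1)

/-- The relation induced by `≪` on the Archimedean classes of non-identity elements. -/
def NzArchClassLT {G : Type*} [Group G] [LinearOrder G]
    (a b : NzArchClasses G) : Prop :=
  ∃ g h : {x : G // x ≠ 1}, a = Quot.mk _ g ∧ b = Quot.mk _ h ∧ ArchLT g.1 h.1

/-- `ℤ^X`, the order on finitely supported functions `X → ℤ` determined by the maximum
point of disagreement: `f < g` iff `f x < g x` where `x` is maximal with `f x ≠ g x`. -/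
def FinsuppLT {X : Type*} (r : X → X → Prop) (f g : X →₀ ℤ) : Prop :=
  ∃ x : X, f x < g x ∧ ∀ y : X, r x y → f y = g y

/-- The lexicographic product `A·B` with the `B`-coordinate dominant:
`⟨a₀,b₀⟩ < ⟨a₁,b₁⟩` iff `b₀ < b₁`, or `b₀ = b₁` and `a₀ < a₁`. -/
def ProdDomLT {A B : Type*} (rA : A → A → Prop) (rB : B → B → Prop)
    (p q : A × B) : Prop :=
  rB p.2 q.2 ∨ (p.2 = q.2 ∧ rA p.1 q.1)

set_option linter.unusedSectionVars false
set_option linter.unusedVariables false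

namespace ArchAux

def Rl (α : Type*) [LinearOrder α] : ((α →₀ ℤ) × ℚ) → ((α →₀ ℤ) × ℚ) → Prop :=
  ProdDomLT (FinsuppLT ((· < ·) : α → α → Prop)) ((· < ·) : ℚ → ℚ → Prop)

variable {α : Type*} [LinearOrder α]

/-- maximal point of disagreement within an upward region -/
theorem exists_maxdiff (P : α → Prop) (f g : α →₀ ℤ)
    (h : ∃ y, P y ∧ f y ≠ g y) :
    ∃ x, P x ∧ f x ≠ g x ∧ ∀ y, P y → f y ≠ g y → y ≤ x := by
  classical
  have hmem : ∀ y, P y → f y ≠ g y →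
      y ∈ (f.support ∪ g.support).filter (fun z => P z ∧ f z ≠ g z) := by
    intro y hy hne
    simp only [Finset.mem_filter, Finset.mem_union, Finsupp.mem_support_iff]
    refine ⟨?_, hy, hne⟩
    by_contra hc
    push_neg at hc
    rw [hc.1, hc.2] at hne
    exact hne rfl
  obtain ⟨y, hy, hne⟩ := h
  set s := (f.support ∪ g.support).filter (fun z => P z ∧ f z ≠ g z) with hs
  have hsne : s.Nonempty := ⟨y, hmem y hy hne⟩
  have hmax := Finset.mem_filter.1 (s.max'_mem hsne)
  exact ⟨s.max' hsne, hmax.2.1, hmax.2.2, fun z hz hzne => Finset.le_max' s z (hmem z hz hzne)⟩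

theorem Rl_connex {p q : (α →₀ ℤ) × ℚ} (h : p ≠ q) : Rl α p q ∨ Rl α q p := by
  rcases eq_or_ne p.2 q.2 with h2 | h2
  · have h1 : p.1 ≠ q.1 := by
      intro h1; exact h (Prod.ext h1 h2)
    have : ∃ y, True ∧ p.1 y ≠ q.1 y := by
      by_contra hc
      push_neg at hc
      exact h1 (Finsupp.ext fun y => hc y trivial)
    obtain ⟨x, -, hne, hmax⟩ := exists_maxdiff (fun _ => True) p.1 q.1 this
    have hab : ∀ y, x < y → p.1 y = q.1 y := by
      intro y hy
      by_contra hne'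
      exact absurd (hmax y trivial hne') (not_le.2 hy)
    rcases hne.lt_or_gt with hlt | hlt
    · exact Or.inl (Or.inr ⟨h2, x, hlt, hab⟩)
    · exact Or.inr (Or.inr ⟨h2.symm, x, hlt, fun y hy => (hab y hy).symm⟩)
  · rcases h2.lt_or_gt with hlt | hlt
    · exact Or.inl (Or.inl hlt)
    · exact Or.inr (Or.inl hlt)

/-- The family of convex equivalence relations on `ℤ^α·ℚ`:
same `ℚ` coordinate, and agreement on the upward closed region `P`. -/
def EP (P : α → Prop) (p q : (α →₀ ℤ) × ℚ) : Prop :=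
  p.2 = q.2 ∧ ∀ y, P y → p.1 y = q.1 y

theorem EP_refl (P : α → Prop) (p) : EP P p p := ⟨rfl, fun _ _ => rfl⟩

theorem EP_symm {P : α → Prop} {p q} (h : EP P p q) : EP P q p :=
  ⟨h.1.symm, fun y hy => (h.2 y hy).symm⟩

theorem EP_trans {P : α → Prop} {p q r} (h : EP P p q) (h' : EP P q r) : EP P p r :=
  ⟨h.1.trans h'.1, fun y hy => (h.2 y hy).trans (h'.2 y hy)⟩

theorem EP_iff_exists {P : α → Prop} (hP : ∀ a b, P a → a ≤ b → P b) {p q} :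
    EP P p q ↔ p = q ∨ ∃ y, ¬ P y ∧ EP (fun z => y < z) p q := by
  constructor
  · intro h
    rcases eq_or_ne p q with rfl | hne
    · exact Or.inl rfl
    have h1 : p.1 ≠ q.1 := fun h1 => hne (Prod.ext h1 h.1)
    have : ∃ y, True ∧ p.1 y ≠ q.1 y := by
      by_contra hc
      push_neg at hc
      exact h1 (Finsupp.ext fun y => hc y trivial)
    obtain ⟨x, -, hnex, hmax⟩ := exists_maxdiff (fun _ => True) p.1 q.1 this
    refine Or.inr ⟨x, fun hPx => hnex (h.2 x hPx), h.1, fun y hy => ?_⟩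
    by_contra hne'
    exact absurd (hmax y trivial hne') (not_le.2 hy)
  · rintro (rfl | ⟨y, hPy, h⟩)
    · exact EP_refl P p
    refine ⟨h.1, fun z hz => h.2 z ?_⟩
    rcases le_or_gt z y with hle | hlt
    · exact absurd (hP z y hz hle) hPy
    · exact hlt

theorem EP_convex {P : α → Prop} (hP : ∀ a b, P a → a ≤ b → P b) {p q r}
    (h : EP P p q) (h1 : ¬ Rl α r p) (h2 : ¬ Rl α q r) : EP P p r := by
  have hq2 : r.2 = p.2 := by
    by_contra hne
    rcases lt_or_gt_of_ne hne with hlt | hlt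
    · exact h1 (Or.inl hlt)
    · exact h2 (Or.inl (h.1 ▸ hlt))
  refine ⟨hq2.symm, fun y hy => ?_⟩
  by_contra hc
  have : ∃ y, P y ∧ r.1 y ≠ p.1 y := ⟨y, hy, fun e => hc e.symm⟩
  obtain ⟨x, hPx, hnex, hmax⟩ := exists_maxdiff P r.1 p.1 this
  have hab : ∀ z, x < z → r.1 z = p.1 z := by
    intro z hz
    by_contra hne'
    exact absurd (hmax z (hP x z hPx hz.le) hne') (not_le.2 hz)
  rcases hnex.lt_or_gt with hlt | hlt
  · exact h1 (Or.inr ⟨hq2, x, hlt, hab⟩)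
  · refine h2 (Or.inr ⟨h.1.symm.trans hq2.symm, x, ?_, ?_⟩)
    · rw [h.2 x hPx] at hlt; exact hlt
    · intro z hz
      rw [← h.2 z (hP x z hPx hz.le)]
      exact (hab z hz).symm

/-- inside one `EP (x < ·)` class, the order is given by the value at `x`. -/
theorem Rl_of_val_lt {x : α} {p q} (h : EP (fun z => x < z) p q)
    (hv : p.1 x < q.1 x) : Rl α p q :=
  Or.inr ⟨h.1, x, hv, h.2⟩

theorem val_le_of_not_Rl {x : α} {p q} (h : EP (fun z => x < z) p q)
    (hn : ¬ Rl α q p) : p.1 x ≤ q.1 x := by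
  by_contra hc
  exact hn (Rl_of_val_lt (EP_symm h) (not_le.1 hc))

end ArchAux

namespace ArchAux

variable {α : Type*} [LinearOrder α]

/-- `[p,q]` is covered by finitely many `R`-classes (finite condensation relation). -/
def FC (R : ((α →₀ ℤ) × ℚ) → ((α →₀ ℤ) × ℚ) → Prop) (p q : (α →₀ ℤ) × ℚ) : Prop :=
  ∃ s : Finset ((α →₀ ℤ) × ℚ), ∀ z,
    ((¬ Rl α z p ∧ ¬ Rl α q z) ∨ (¬ Rl α z q ∧ ¬ Rl α p z)) → ∃ w ∈ s, R z w

theorem FC_symm {R} {p q : (α →₀ ℤ) × ℚ} (h : FC R p q) : FC R q p := by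
  obtain ⟨s, hs⟩ := h
  exact ⟨s, fun z hz => hs z (Or.symm hz)⟩

theorem not_FC_of_lt {x : α} {p q : (α →₀ ℤ) × ℚ} (hpq : Rl α p q)
    (hn : ¬ EP (fun z => x < z) p q) : ¬ FC (EP (fun z => x ≤ z)) p q := by
  classical
  rintro ⟨s, hs⟩
  set z : ℕ → (α →₀ ℤ) × ℚ :=
    fun k => (p.1.update x (p.1 x + (k + 1)), p.2) with hz
  have hzval : ∀ k, (z k).1 x = p.1 x + (k + 1) := by
    intro k
    simp [hz, Finsupp.coe_update]
  have hzoth : ∀ k y, y ≠ x → (z k).1 y = p.1 y := by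
    intro k y hy
    simp [hz, Finsupp.coe_update, Function.update_of_ne hy]
  have H1 : ∀ k, ¬ Rl α (z k) p := by
    rintro k (hlt | ⟨-, y, hy, -⟩)
    · exact lt_irrefl _ hlt
    · rcases eq_or_ne y x with rfl | hne
      · rw [hzval] at hy; omega
      · rw [hzoth k y hne] at hy; exact lt_irrefl _ hy
  have H2 : ∀ k, ¬ Rl α q (z k) := by
    rcases eq_or_ne p.2 q.2 with h2 | h2
    · -- same ℚ coordinate; the max disagreement of p,q lies above x
      have hpq1 : FinsuppLT ((· < ·) : α → α → Prop) p.1 q.1 := by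
        rcases hpq with hlt | ⟨-, h⟩
        · rw [h2] at hlt; exact absurd hlt (lt_irrefl _)
        · exact h
      obtain ⟨w, hw, hagw⟩ := hpq1
      have hyx : ∃ y, x < y ∧ p.1 y ≠ q.1 y := by
        by_contra hc
        push_neg at hc
        exact hn ⟨h2, fun y hy => hc y hy⟩
      obtain ⟨y, hxy, hyne⟩ := hyx
      have hxw : x < w := by
        rcases lt_or_ge w y with hlt | hle
        · exact absurd (hagw y hlt) hyne
        · exact lt_of_lt_of_le hxy hle
      rintro k (hlt | ⟨-, v, hv, hagv⟩)
      · rw [hz] at hlt; simp only at hlt; rw [← h2] at hlt; exact lt_irrefl _ hlt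
      · rcases lt_trichotomy v w with hvw | rfl | hwv
        · have := hagv w hvw
          rw [hzoth k w (ne_of_gt hxw)] at this
          rw [this] at hw
          exact lt_irrefl _ hw
        · rw [hzoth k v (ne_of_gt hxw)] at hv
          exact absurd hw (not_lt.2 hv.le)
        · have := hagw v hwv
          rw [hzoth k v (ne_of_gt (hxw.trans hwv))] at hv
          rw [this] at hv
          exact lt_irrefl _ hv
    · -- different ℚ coordinates: p.2 < q.2
      have hlt2 : p.2 < q.2 := by
        rcases hpq with hlt | ⟨he, -⟩
        · exact hlt
        · exact absurd he h2
      rintro k (hlt | ⟨he, -⟩)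
      · rw [hz] at hlt; simp only at hlt; exact absurd (hlt2.trans hlt) (lt_irrefl _)
      · rw [hz] at he; simp only at he; exact h2 he.symm
  have H3 : ∀ j k : ℕ, EP (fun z => x ≤ z) (z j) (z k) → j = k := by
    intro j k h
    have := h.2 x le_rfl
    rw [hzval, hzval] at this
    omega
  have hch : ∀ k : ℕ, ∃ w, w ∈ s ∧ EP (fun z => x ≤ z) (z k) w := by
    intro k
    obtain ⟨w, hw1, hw2⟩ := hs (z k) (Or.inl ⟨H1 k, H2 k⟩)
    exact ⟨w, hw1, hw2⟩
  choose w hwmem hwep using hch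
  have : ∃ j k : ℕ, j ≠ k ∧ (⟨w j, hwmem j⟩ : {a // a ∈ s}) = ⟨w k, hwmem k⟩ := by
    obtain ⟨j, k, hjk, he⟩ := Finite.exists_ne_map_eq_of_infinite
      (fun n : ℕ => (⟨w n, hwmem n⟩ : {a // a ∈ s}))
    exact ⟨j, k, hjk, he⟩
  obtain ⟨j, k, hjk, he⟩ := this
  have hwe : w j = w k := congrArg Subtype.val he
  exact hjk (H3 j k (EP_trans (hwep j) (hwe ▸ EP_symm (hwep k))))

theorem FC_iff {x : α} {p q : (α →₀ ℤ) × ℚ} :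
    FC (EP (fun z => x ≤ z)) p q ↔ EP (fun z => x < z) p q := by
  classical
  constructor
  · intro h
    by_contra hn
    have hne : p ≠ q := by
      rintro rfl
      exact hn (EP_refl _ p)
    rcases Rl_connex hne with hpq | hqp
    · exact not_FC_of_lt hpq hn h
    · exact not_FC_of_lt hqp (fun he => hn (EP_symm he)) (FC_symm h)
  · intro h
    have hup : ∀ a b : α, x < a → a ≤ b → x < b := fun a b ha hab => lt_of_lt_of_le ha hab
    refine ⟨(Finset.Icc (min (p.1 x) (q.1 x)) (max (p.1 x) (q.1 x))).image
      (fun k => (p.1.update x k, p.2)), ?_⟩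
    rintro z (⟨h1, h2⟩ | ⟨h1, h2⟩)
    · have hpz : EP (fun z => x < z) p z := EP_convex hup h h1 h2
      have hzq : EP (fun z => x < z) z q := EP_trans (EP_symm hpz) h
      refine ⟨(p.1.update x (z.1 x), p.2), ?_, ?_⟩
      · refine Finset.mem_image.2 ⟨z.1 x, ?_, rfl⟩
        rw [Finset.mem_Icc]
        constructor
        · exact le_trans (min_le_left _ _) (val_le_of_not_Rl hpz h1)
        · exact le_trans (val_le_of_not_Rl hzq h2) (le_max_right _ _)
      · refine ⟨hpz.1.symm, fun y hy => ?_⟩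
        rcases eq_or_lt_of_le hy with rfl | hy'
        · simp [Finsupp.coe_update]
        · rw [← hpz.2 y hy']
          simp [Finsupp.coe_update, Function.update_of_ne (ne_of_gt hy')]
    · have hqz : EP (fun z => x < z) q z := EP_convex hup (EP_symm h) h1 h2
      have hpz : EP (fun z => x < z) p z := EP_trans h hqz
      refine ⟨(p.1.update x (z.1 x), p.2), ?_, ?_⟩
      · refine Finset.mem_image.2 ⟨z.1 x, ?_, rfl⟩
        rw [Finset.mem_Icc]
        constructor
        · exact le_trans (min_le_right _ _) (val_le_of_not_Rl hqz h1)
        · exact le_trans (val_le_of_not_Rl (EP_symm hpz) h2) (le_max_left _ _)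
      · refine ⟨hpz.1.symm, fun y hy => ?_⟩
        rcases eq_or_lt_of_le hy with rfl | hy'
        · simp [Finsupp.coe_update]
        · rw [← hpz.2 y hy']
          simp [Finsupp.coe_update, Function.update_of_ne (ne_of_gt hy')]

theorem FC_inv (ψ : Rl α ≃r Rl α) (R : ((α →₀ ℤ) × ℚ) → ((α →₀ ℤ) × ℚ) → Prop)
    (hR : ∀ a b, R a b ↔ R (ψ a) (ψ b)) {p q} (h : FC R p q) : FC R (ψ p) (ψ q) := by
  classical
  obtain ⟨s, hs⟩ := h
  refine ⟨s.image ψ, fun z hz => ?_⟩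
  have hz' : (¬ Rl α (ψ.symm z) p ∧ ¬ Rl α q (ψ.symm z)) ∨
      (¬ Rl α (ψ.symm z) q ∧ ¬ Rl α p (ψ.symm z)) := by
    have e1 : ∀ a, Rl α (ψ.symm z) a ↔ Rl α z (ψ a) := by
      intro a
      rw [← ψ.map_rel_iff, ψ.apply_symm_apply]
    have e2 : ∀ a, Rl α a (ψ.symm z) ↔ Rl α (ψ a) z := by
      intro a
      rw [← ψ.map_rel_iff, ψ.apply_symm_apply]
    rcases hz with ⟨h1, h2⟩ | ⟨h1, h2⟩
    · exact Or.inl ⟨fun hc => h1 ((e1 p).1 hc), fun hc => h2 ((e2 q).1 hc)⟩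
    · exact Or.inr ⟨fun hc => h1 ((e1 q).1 hc), fun hc => h2 ((e2 p).1 hc)⟩
  obtain ⟨w, hw1, hw2⟩ := hs (ψ.symm z) hz'
  refine ⟨ψ w, Finset.mem_image.2 ⟨w, hw1, rfl⟩, ?_⟩
  have := (hR (ψ.symm z) w).1 hw2
  rwa [ψ.apply_symm_apply] at this

section Inv

variable [WellFoundedLT α]

theorem EP_le_inv : ∀ x : α, ∀ (ψ : Rl α ≃r Rl α) (p q),
    EP (fun z => x ≤ z) p q ↔ EP (fun z => x ≤ z) (ψ p) (ψ q) := by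
  intro x
  induction x using WellFoundedLT.induction with
  | ind x IH =>
    intro ψ p q
    have hlt_inv : ∀ y : α, y < x → ∀ (ψ : Rl α ≃r Rl α) (p q : (α →₀ ℤ) × ℚ),
        EP (fun z => y < z) p q ↔ EP (fun z => y < z) (ψ p) (ψ q) := by
      intro y hy ψ p q
      constructor
      · intro h
        exact FC_iff.1 (FC_inv ψ _ (fun a b => IH y hy ψ a b) (FC_iff.2 h))
      · intro h
        have := FC_iff.1 (FC_inv ψ.symm _ (fun a b => IH y hy ψ.symm a b) (FC_iff.2 h))
        rwa [ψ.symm_apply_apply, ψ.symm_apply_apply] at this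
    have hup : ∀ a b : α, x ≤ a → a ≤ b → x ≤ b := fun a b ha hab => le_trans ha hab
    rw [EP_iff_exists hup, EP_iff_exists hup]
    constructor
    · rintro (rfl | ⟨y, hy, h⟩)
      · exact Or.inl rfl
      · exact Or.inr ⟨y, hy, (hlt_inv y (not_le.1 hy) ψ p q).1 h⟩
    · rintro (he | ⟨y, hy, h⟩)
      · exact Or.inl (ψ.injective he)
      · exact Or.inr ⟨y, hy, (hlt_inv y (not_le.1 hy) ψ p q).2 h⟩

theorem EP_lt_inv (x : α) (ψ : Rl α ≃r Rl α) (p q) :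
    EP (fun z => x < z) p q ↔ EP (fun z => x < z) (ψ p) (ψ q) := by
  constructor
  · intro h
    exact FC_iff.1 (FC_inv ψ _ (fun a b => EP_le_inv x ψ a b) (FC_iff.2 h))
  · intro h
    have := FC_iff.1 (FC_inv ψ.symm _ (fun a b => EP_le_inv x ψ.symm a b) (FC_iff.2 h))
    rwa [ψ.symm_apply_apply, ψ.symm_apply_apply] at this

theorem EP_false_inv (ψ : Rl α ≃r Rl α) (p q) :
    EP (fun _ : α => False) p q ↔ EP (fun _ : α => False) (ψ p) (ψ q) := by
  have hup : ∀ a b : α, False → a ≤ b → False := fun a b ha _ => ha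
  rw [EP_iff_exists hup, EP_iff_exists hup]
  constructor
  · rintro (rfl | ⟨y, -, h⟩)
    · exact Or.inl rfl
    · exact Or.inr ⟨y, not_false, (EP_lt_inv y ψ p q).1 h⟩
  · rintro (he | ⟨y, -, h⟩)
    · exact Or.inl (ψ.injective he)
    · exact Or.inr ⟨y, not_false, (EP_lt_inv y ψ p q).2 h⟩

end Inv

end ArchAux

namespace ArchAux

section Gside

variable {α : Type*} [LinearOrder α] {G : Type*} [Group G] [LinearOrder G]
  [CovariantClass G G (· * ·) (· ≤ ·)]
  [CovariantClass G G (Function.swap (· * ·)) (· ≤ ·)]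

/-- left translation as an automorphism of the order of `G` -/
def mulIso (g : G) : ((· < ·) : G → G → Prop) ≃r ((· < ·) : G → G → Prop) where
  toEquiv := Equiv.mulLeft g
  map_rel_iff' := @fun a b => by
    simp only [Equiv.coe_mulLeft]
    exact mul_lt_mul_iff_left g

variable (φ : ((· < ·) : G → G → Prop) ≃r Rl α)

/-- left translation, conjugated to an automorphism of `ℤ^α·ℚ` -/
def psi (g : G) : Rl α ≃r Rl α := (φ.symm.trans (mulIso g)).trans φ

theorem psi_apply (g h : G) : psi φ g (φ h) = φ (g * h) := by
  simp [psi, mulIso, RelIso.trans_apply]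

section cls

variable {P : α → Prop}

theorem EP_mul_iff (hinv : ∀ (g : G) (p q), EP P p q ↔ EP P (psi φ g p) (psi φ g q))
    (g a b : G) : EP P (φ a) (φ b) ↔ EP P (φ (g * a)) (φ (g * b)) := by
  have := hinv g (φ a) (φ b)
  rwa [psi_apply, psi_apply] at this

theorem mem_mul (hinv : ∀ (g : G) (p q), EP P p q ↔ EP P (psi φ g p) (psi φ g q))
    {a b : G} (ha : EP P (φ a) (φ 1)) (hb : EP P (φ b) (φ 1)) :
    EP P (φ (a * b)) (φ 1) := by
  have := (EP_mul_iff φ hinv a b 1).1 hb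
  rw [mul_one] at this
  exact EP_trans this ha

theorem mem_inv (hinv : ∀ (g : G) (p q), EP P p q ↔ EP P (psi φ g p) (psi φ g q))
    {a : G} (ha : EP P (φ a) (φ 1)) : EP P (φ a⁻¹) (φ 1) := by
  have := (EP_mul_iff φ hinv a⁻¹ a 1).1 ha
  rw [inv_mul_cancel, mul_one] at this
  exact EP_symm this

theorem mem_pow (hinv : ∀ (g : G) (p q), EP P p q ↔ EP P (psi φ g p) (psi φ g q))
    {a : G} (ha : EP P (φ a) (φ 1)) (n : ℕ) : EP P (φ (a ^ n)) (φ 1) := by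
  induction n with
  | zero => rw [pow_zero]; exact EP_refl _ _
  | succ n IH => rw [pow_succ]; exact mem_mul φ hinv IH ha

theorem diff_mem (hinv : ∀ (g : G) (p q), EP P p q ↔ EP P (psi φ g p) (psi φ g q))
    {a b : G} (h : EP P (φ a) (φ b)) : EP P (φ (b⁻¹ * a)) (φ 1) := by
  have := (EP_mul_iff φ hinv b⁻¹ a b).1 h
  rwa [inv_mul_cancel] at this

theorem mem_convex (hinv : ∀ (g : G) (p q), EP P p q ↔ EP P (psi φ g p) (psi φ g q))
    (hP : ∀ a b : α, P a → a ≤ b → P b) {a b : G}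
    (ha : EP P (φ a) (φ 1)) (h1 : 1 ≤ b) (h2 : b ≤ a) : EP P (φ b) (φ 1) := by
  have k1 : ¬ Rl α (φ b) (φ 1) := fun hc => absurd (φ.map_rel_iff.1 hc) (not_lt.2 h1)
  have k2 : ¬ Rl α (φ a) (φ b) := fun hc => absurd (φ.map_rel_iff.1 hc) (not_lt.2 h2)
  exact EP_symm (EP_convex hP (EP_symm ha) k1 k2)

theorem mem_oabs_iff (hinv : ∀ (g : G) (p q), EP P p q ↔ EP P (psi φ g p) (psi φ g q))
    {a : G} : EP P (φ (oabs a)) (φ 1) ↔ EP P (φ a) (φ 1) := by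
  have : oabs a = a ∨ oabs a = a⁻¹ := by
    unfold oabs; split
    · exact Or.inl rfl
    · exact Or.inr rfl
  rcases this with h | h
  · rw [h]
  · rw [h]
    constructor
    · intro hh
      have := mem_inv φ hinv hh
      rwa [inv_inv] at this
    · exact mem_inv φ hinv

end cls

end Gside

section OabsLemmas

variable {G : Type*} [Group G] [LinearOrder G]
  [CovariantClass G G (· * ·) (· ≤ ·)]
  [CovariantClass G G (Function.swap (· * ·)) (· ≤ ·)]

theorem one_le_oabs (g : G) : 1 ≤ oabs g := by
  unfold oabs; split
  · assumption
  · rename_i h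
    exact Left.one_le_inv_iff.2 (not_le.1 h).le

theorem oabs_pow (g : G) (n : ℕ) : oabs (g ^ n) = (oabs g) ^ n := by
  unfold oabs
  rcases le_or_gt 1 g with h | h
  · rw [if_pos h, if_pos (Left.one_le_pow_of_le h n)]
  · rw [if_neg (not_le.2 h)]
    rcases eq_or_lt_of_le (Left.pow_le_one_of_le h.le n) with he | hlt
    · rw [if_pos he.ge, inv_pow, he, inv_one]
    · rw [if_neg (not_le.2 hlt), inv_pow]

theorem archEquiv_refl (g : G) : ArchEquiv g g :=
  ⟨1, 1, by rw [pow_one], by rw [pow_one]⟩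

theorem archEquiv_symm {g h : G} : ArchEquiv g h → ArchEquiv h g :=
  fun ⟨n, m, h1, h2⟩ => ⟨m, n, h2, h1⟩

theorem archEquiv_trans {g h k : G} : ArchEquiv g h → ArchEquiv h k → ArchEquiv g k := by
  rintro ⟨n, m, h1, h2⟩ ⟨n', m', h3, h4⟩
  refine ⟨n * n', m' * m, ?_, ?_⟩
  · calc oabs k ≤ oabs (h ^ n') := h3
      _ = (oabs h) ^ n' := oabs_pow h n'
      _ ≤ (oabs (g ^ n)) ^ n' := pow_le_pow_left' h1 n'
      _ = ((oabs g) ^ n) ^ n' := by rw [oabs_pow]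
      _ = (oabs g) ^ (n * n') := by rw [← pow_mul]
      _ = oabs (g ^ (n * n')) := (oabs_pow g _).symm
  · calc oabs g ≤ oabs (h ^ m) := h2
      _ = (oabs h) ^ m := oabs_pow h m
      _ ≤ (oabs (k ^ m')) ^ m := pow_le_pow_left' h4 m
      _ = ((oabs k) ^ m') ^ m := by rw [oabs_pow]
      _ = (oabs k) ^ (m' * m) := by rw [← pow_mul]
      _ = oabs (k ^ (m' * m)) := (oabs_pow k _).symm

theorem archLT_not_equiv {g h : G} (hlt : ArchLT g h) : ¬ ArchEquiv g h :=
  fun ⟨n, _, h1, _⟩ => absurd (hlt n) (not_lt.2 h1)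

theorem quot_eq_iff (a b : {x : G // x ≠ 1}) :
    (Quot.mk _ a : NzArchClasses G) = Quot.mk _ b ↔ ArchEquiv a.1 b.1 := by
  rw [Quot.eq]
  exact Equivalence.eqvGen_iff
    ⟨fun x => archEquiv_refl x.1, fun h => archEquiv_symm h, fun h h' => archEquiv_trans h h'⟩

end OabsLemmas

section Glevel

variable {α : Type*} [LinearOrder α] [WellFoundedLT α]
  {G : Type*} [Group G] [LinearOrder G]
  [CovariantClass G G (· * ·) (· ≤ ·)]
  [CovariantClass G G (Function.swap (· * ·)) (· ≤ ·)]
  (φ : ((· < ·) : G → G → Prop) ≃r Rl α)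

/-- `x` is the Archimedean level of `g`: the maximal coordinate where `φ g` differs
from `φ 1`. -/
def IsLv (g : G) (x : α) : Prop :=
  (φ g).2 = (φ 1).2 ∧ (φ g).1 x ≠ (φ 1).1 x ∧ ∀ y, x < y → (φ g).1 y = (φ 1).1 y

theorem lv_exists {g : G} (hg : EP (fun _ : α => False) (φ g) (φ 1)) (hne : g ≠ 1) :
    ∃ x, IsLv φ g x := by
  have h2 : (φ g).2 = (φ 1).2 := hg.1
  have h1 : (φ g).1 ≠ (φ 1).1 := by
    intro he
    exact hne (φ.injective (Prod.ext he h2))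
  have hex : ∃ y, True ∧ (φ g).1 y ≠ (φ 1).1 y := by
    by_contra hc
    push_neg at hc
    exact h1 (Finsupp.ext fun y => hc y trivial)
  obtain ⟨x, -, hnex, hmax⟩ := exists_maxdiff _ _ _ hex
  refine ⟨x, h2, hnex, fun y hy => ?_⟩
  by_contra hc
  exact absurd (hmax y trivial hc) (not_le.2 hy)

theorem archLT_of_lv_lt {g h : G} {x y : α} (hg : IsLv φ g x) (hh : IsLv φ h y)
    (hxy : x < y) : ArchLT g h := by
  intro n
  by_contra hc
  have hle : oabs h ≤ oabs (g ^ n) := not_lt.1 hc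
  have hinvy : ∀ (g : G) (p q), EP (fun z => y ≤ z) p q ↔
      EP (fun z => y ≤ z) (psi φ g p) (psi φ g q) := fun g p q => EP_le_inv y (psi φ g) p q
  have hinvx : ∀ (g : G) (p q), EP (fun z => x < z) p q ↔
      EP (fun z => x < z) (psi φ g p) (psi φ g q) := fun g p q => EP_lt_inv x (psi φ g) p q
  have hgx : EP (fun z => x < z) (φ g) (φ 1) := ⟨hg.1, hg.2.2⟩
  have hgn' : EP (fun z => x < z) (φ (oabs (g ^ n))) (φ 1) :=
    (mem_oabs_iff φ hinvx).2 (mem_pow φ hinvx hgx n)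
  have hgny : EP (fun z => y ≤ z) (φ (oabs (g ^ n))) (φ 1) :=
    ⟨hgn'.1, fun z hz => hgn'.2 z (lt_of_lt_of_le hxy hz)⟩
  have hhy : ¬ EP (fun z => y ≤ z) (φ (oabs h)) (φ 1) := by
    intro hcc
    exact hh.2.1 (((mem_oabs_iff φ hinvy).1 hcc).2 y le_rfl)
  exact hhy (mem_convex φ hinvy (fun a b ha hab => le_trans ha hab)
    hgny (one_le_oabs h) hle)

theorem val_pow_ge {u : G} {x : α} (hu1 : 1 ≤ u)
    (huC : EP (fun z => x < z) (φ u) (φ 1))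
    (huD : ¬ EP (fun z => x ≤ z) (φ u) (φ 1)) :
    ∀ n : ℕ, (φ 1).1 x + n ≤ (φ (u ^ n)).1 x := by
  have hinvx : ∀ (g : G) (p q), EP (fun z => x < z) p q ↔
      EP (fun z => x < z) (psi φ g p) (psi φ g q) := fun g p q => EP_lt_inv x (psi φ g) p q
  have hinvx' : ∀ (g : G) (p q), EP (fun z => x ≤ z) p q ↔
      EP (fun z => x ≤ z) (psi φ g p) (psi φ g q) := fun g p q => EP_le_inv x (psi φ g) p q
  intro n
  induction n with
  | zero => simp [pow_zero]
  | succ n IH =>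
    have hn : EP (fun z => x < z) (φ (u ^ n)) (φ 1) := mem_pow φ hinvx huC n
    have hn1 : EP (fun z => x < z) (φ (u ^ (n + 1))) (φ 1) := mem_pow φ hinvx huC (n + 1)
    have hEP : EP (fun z => x < z) (φ (u ^ n)) (φ (u ^ (n + 1))) :=
      EP_trans hn (EP_symm hn1)
    have hle : u ^ n ≤ u ^ (n + 1) := by
      rw [pow_succ]
      calc u ^ n = u ^ n * 1 := (mul_one _).symm
        _ ≤ u ^ n * u := mul_le_mul_right hu1 _
    have hnR : ¬ Rl α (φ (u ^ (n + 1))) (φ (u ^ n)) := fun hc =>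
      absurd (φ.map_rel_iff.1 hc) (not_lt.2 hle)
    have hmono : (φ (u ^ n)).1 x ≤ (φ (u ^ (n + 1))).1 x := val_le_of_not_Rl hEP hnR
    have hstrict : (φ (u ^ n)).1 x ≠ (φ (u ^ (n + 1))).1 x := by
      intro he
      have hEP' : EP (fun z => x ≤ z) (φ (u ^ (n + 1))) (φ (u ^ n)) := by
        refine ⟨hEP.1.symm, fun z hz => ?_⟩
        rcases eq_or_lt_of_le hz with rfl | hz'
        · exact he.symm
        · exact (hEP.2 z hz').symm
      have hd := diff_mem φ hinvx' hEP'
      rw [pow_succ, inv_mul_cancel_left] at hd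
      exact huD hd
    push_cast
    push_cast at IH
    omega

theorem le_pow_of_lv_eq {g h : G} {x : α} (hg : IsLv φ g x) (hh : IsLv φ h x) :
    ∃ n : ℕ, oabs h ≤ oabs (g ^ n) := by
  have hinvx : ∀ (g : G) (p q), EP (fun z => x < z) p q ↔
      EP (fun z => x < z) (psi φ g p) (psi φ g q) := fun g p q => EP_lt_inv x (psi φ g) p q
  have hinvx' : ∀ (g : G) (p q), EP (fun z => x ≤ z) p q ↔
      EP (fun z => x ≤ z) (psi φ g p) (psi φ g q) := fun g p q => EP_le_inv x (psi φ g) p q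
  have hu1 : 1 ≤ oabs g := one_le_oabs g
  have huC : EP (fun z => x < z) (φ (oabs g)) (φ 1) :=
    (mem_oabs_iff φ hinvx).2 ⟨hg.1, hg.2.2⟩
  have huD : ¬ EP (fun z => x ≤ z) (φ (oabs g)) (φ 1) := by
    intro hc
    exact hg.2.1 (((mem_oabs_iff φ hinvx').1 hc).2 x le_rfl)
  have hvC : EP (fun z => x < z) (φ (oabs h)) (φ 1) :=
    (mem_oabs_iff φ hinvx).2 ⟨hh.1, hh.2.2⟩
  have hv1 : 1 ≤ oabs h := one_le_oabs h
  have hb0 : (φ 1).1 x ≤ (φ (oabs h)).1 x := by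
    refine val_le_of_not_Rl (EP_symm hvC) ?_
    exact fun hc => absurd (φ.map_rel_iff.1 hc) (not_lt.2 hv1)
  obtain ⟨n, hn⟩ : ∃ n : ℕ, (φ (oabs h)).1 x < (φ 1).1 x + n :=
    ⟨((φ (oabs h)).1 x - (φ 1).1 x).toNat + 1, by push_cast; omega⟩
  have hval := val_pow_ge φ hu1 huC huD n
  have hlt : (φ (oabs h)).1 x < (φ ((oabs g) ^ n)).1 x := by omega
  have hRl : Rl α (φ (oabs h)) (φ ((oabs g) ^ n)) :=
    Rl_of_val_lt (EP_trans hvC (EP_symm (mem_pow φ hinvx huC n))) hlt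
  refine ⟨n, ?_⟩
  rw [oabs_pow]
  exact (φ.map_rel_iff.1 hRl).le

theorem archEquiv_of_lv_eq {g h : G} {x : α} (hg : IsLv φ g x) (hh : IsLv φ h x) :
    ArchEquiv g h := by
  obtain ⟨n, hn⟩ := le_pow_of_lv_eq φ hg hh
  obtain ⟨m, hm⟩ := le_pow_of_lv_eq φ hh hg
  exact ⟨n, m, hn, hm⟩

theorem mem_false_of_archEquiv {g h : G}
    (hh : EP (fun _ : α => False) (φ h) (φ 1)) (he : ArchEquiv g h) :
    EP (fun _ : α => False) (φ g) (φ 1) := by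
  have hinvf : ∀ (g : G) (p q), EP (fun _ : α => False) p q ↔
      EP (fun _ : α => False) (psi φ g p) (psi φ g q) := fun g p q => EP_false_inv (psi φ g) p q
  obtain ⟨n, m, -, h2⟩ := he
  have hk : EP (fun _ : α => False) (φ (oabs (h ^ m))) (φ 1) :=
    (mem_oabs_iff φ hinvf).2 (mem_pow φ hinvf hh m)
  have hg' : EP (fun _ : α => False) (φ (oabs g)) (φ 1) :=
    mem_convex φ hinvf (fun _ _ ha _ => ha.elim) hk (one_le_oabs g) h2
  exact (mem_oabs_iff φ hinvf).1 hg'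

theorem lv_eq_of_archEquiv {g h : G} {x y : α} (hg : IsLv φ g x) (hh : IsLv φ h y)
    (he : ArchEquiv g h) : x = y := by
  rcases lt_trichotomy x y with hlt | he' | hlt
  · exact absurd he (archLT_not_equiv (archLT_of_lv_lt φ hg hh hlt))
  · exact he'
  · exact absurd (archEquiv_symm he) (archLT_not_equiv (archLT_of_lv_lt φ hh hg hlt))

end Glevel

end ArchAux

open ArchAux

/-- If a countable linearly ordered group `G` has order type `ℤ^α·ℚ` (ℚ-coordinate
dominant) for a well-order `α`, then there is a downward closed set `S` of Archimedean
classes of non-identity elements of `G` such that `S`, ordered by `≪`, is order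
isomorphic to `α`. -/
theorem archClasses_initialSegment_of_orderType_zpow_rat
    {α : Type*} [LinearOrder α] [WellFoundedLT α]
    {G : Type*} [Group G] [LinearOrder G] [Countable G]
    [CovariantClass G G (· * ·) (· ≤ ·)]
    [CovariantClass G G (Function.swap (· * ·)) (· ≤ ·)]
    (hiso : Nonempty (((· < ·) : G → G → Prop) ≃r
      ProdDomLT (FinsuppLT ((· < ·) : α → α → Prop)) ((· < ·) : ℚ → ℚ → Prop))) :
    ∃ S : Set (NzArchClasses G),
      (∀ a ∈ S, ∀ b : NzArchClasses G, NzArchClassLT b a → b ∈ S) ∧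
      Nonempty (Subrel (NzArchClassLT (G := G)) S ≃r ((· < ·) : α → α → Prop)) := by
  classical
  obtain ⟨φ0⟩ := hiso
  have φ : ((· < ·) : G → G → Prop) ≃r Rl α := φ0
  have hinvf : ∀ (g : G) (p q), EP (fun _ : α => False) p q ↔
      EP (fun _ : α => False) (psi φ g p) (psi φ g q) := fun g p q => EP_false_inv (psi φ g) p q
  set S : Set (NzArchClasses G) := {c | ∃ g : {x : G // x ≠ 1},
    c = Quot.mk _ g ∧ EP (fun _ : α => False) (φ g.1) (φ 1)} with hS
  refine ⟨S, ?_, ?_⟩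
  · -- downward closed
    rintro a ⟨g, hag, hgC⟩ b ⟨g', h', hb, ha, hlt⟩
    have heq : ArchEquiv h'.1 g.1 := (quot_eq_iff h' g).1 (ha.symm.trans hag)
    have hh'C : EP (fun _ : α => False) (φ h'.1) (φ 1) := mem_false_of_archEquiv φ hgC heq
    have hle : oabs g'.1 ≤ oabs h'.1 := by
      have h1 := hlt 1
      rw [pow_one] at h1
      exact h1.le
    have hg'C : EP (fun _ : α => False) (φ (oabs g'.1)) (φ 1) :=
      mem_convex φ hinvf (fun _ _ hfa _ => hfa.elim)
        ((mem_oabs_iff φ hinvf).2 hh'C) (one_le_oabs g'.1) hle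
    exact ⟨g', hb, (mem_oabs_iff φ hinvf).1 hg'C⟩
  · -- the order isomorphism
    have hCmem : ∀ c : {c // c ∈ S}, ∃ x : α, ∃ g : {x : G // x ≠ 1},
        c.1 = Quot.mk _ g ∧ EP (fun _ : α => False) (φ g.1) (φ 1) ∧ IsLv φ g.1 x := by
      rintro ⟨c, g, hc, hgC⟩
      obtain ⟨x, hx⟩ := lv_exists φ hgC g.2
      exact ⟨x, g, hc, hgC, hx⟩
    choose F rep hrep hrepC hrepLv using hCmem
    have hinj : Function.Injective F := by
      intro c c' he
      have h2 := hrepLv c'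
      rw [← he] at h2
      have hequiv : ArchEquiv (rep c).1 (rep c').1 :=
        archEquiv_of_lv_eq φ (hrepLv c) h2
      apply Subtype.ext
      rw [hrep c, hrep c']; refine (quot_eq_iff _ _).2 ?_
      exact hequiv
    have hsurj : Function.Surjective F := by
      intro x
      set p : (α →₀ ℤ) × ℚ := ((φ 1).1.update x ((φ 1).1 x + 1), (φ 1).2) with hp
      set g0 : G := φ.symm p with hg0def
      have hg0 : φ g0 = p := φ.apply_symm_apply p
      have hpx : (φ g0).1 x = (φ 1).1 x + 1 := by
        rw [hg0, hp]
        simp [Finsupp.coe_update]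
      have hpo : ∀ y, y ≠ x → (φ g0).1 y = (φ 1).1 y := by
        intro y hy
        rw [hg0, hp]
        simp [Finsupp.coe_update, Function.update_of_ne hy]
      have hne : g0 ≠ 1 := by
        intro he
        rw [he] at hpx
        omega
      have hC : EP (fun _ : α => False) (φ g0) (φ 1) := by
        refine ⟨?_, fun y hy => hy.elim⟩
        rw [hg0, hp]
      have hLv : IsLv φ g0 x := ⟨hC.1, by rw [hpx]; omega, fun y hy => hpo y (ne_of_gt hy)⟩
      have hcS : Quot.mk _ (⟨g0, hne⟩ : {x : G // x ≠ 1}) ∈ S := ⟨⟨g0, hne⟩, rfl, hC⟩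
      set c : {c // c ∈ S} := ⟨Quot.mk _ ⟨g0, hne⟩, hcS⟩ with hcdef
      have heq : ArchEquiv g0 (rep c).1 :=
        (quot_eq_iff ⟨g0, hne⟩ (rep c)).1 (hrep c)
      exact ⟨c, (lv_eq_of_archEquiv φ hLv (hrepLv c) heq).symm⟩
    have hlt_iff : ∀ c c' : {c // c ∈ S}, NzArchClassLT c.1 c'.1 ↔ F c < F c' := by
      intro c c'
      constructor
      · rintro ⟨g', h', hc, hc', hlt⟩
        have he1 : ArchEquiv g'.1 (rep c).1 := (quot_eq_iff g' (rep c)).1 (hc.symm.trans (hrep c))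
        have he2 : ArchEquiv h'.1 (rep c').1 :=
          (quot_eq_iff h' (rep c')).1 (hc'.symm.trans (hrep c'))
        have hg'C : EP (fun _ : α => False) (φ g'.1) (φ 1) :=
          mem_false_of_archEquiv φ (hrepC c) he1
        have hh'C : EP (fun _ : α => False) (φ h'.1) (φ 1) :=
          mem_false_of_archEquiv φ (hrepC c') he2
        obtain ⟨x1, hx1⟩ := lv_exists φ hg'C g'.2
        obtain ⟨x2, hx2⟩ := lv_exists φ hh'C h'.2
        have e1 : x1 = F c := lv_eq_of_archEquiv φ hx1 (hrepLv c) he1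
        have e2 : x2 = F c' := lv_eq_of_archEquiv φ hx2 (hrepLv c') he2
        rw [← e1, ← e2]
        rcases lt_trichotomy x1 x2 with h | h | h
        · exact h
        · exfalso
          rw [h] at hx1
          exact archLT_not_equiv hlt (archEquiv_of_lv_eq φ hx1 hx2)
        · exfalso
          have hlt2 := archLT_of_lv_lt φ hx2 hx1 h 1
          have hlt1 := hlt 1
          rw [pow_one] at hlt1 hlt2
          exact absurd hlt2 (not_lt.2 hlt1.le)
      · intro h
        exact ⟨rep c, rep c', hrep c, hrep c', archLT_of_lv_lt φ (hrepLv c) (hrepLv c') h⟩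
    refine ⟨⟨Equiv.ofBijective F ⟨hinj, hsurj⟩, ?_⟩⟩
    intro c c'
    exact (hlt_iff c c').symm
end

section
/- Let X be a linear order and consider the standard linearly ordered abelian group ℤ^X (finitely supported functions from X to ℤ with pointwise addition and the maximum-disagreement order). For nonzero f, g ∈ ℤ^X: f is Archimedean less than g if and only if the maximum of the support of f is strictly less than the maximum of the support of g, and f is Archimedean equivalent to g if and only if the maxima of their supports are equal. -/
attribute [local instance] Classical.propDecidable

/-- The strict order on `ℤ^X` for a linear order `X`. -/
def ZLT {X : Type*} [LinearOrder X] (f g : X →₀ ℤ) : Prop :=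
  FinsuppLT ((· < ·) : X → X → Prop) f g

/-- The corresponding non-strict order on `ℤ^X`. -/
def ZLE {X : Type*} [LinearOrder X] (f g : X →₀ ℤ) : Prop :=
  ZLT f g ∨ f = g

/-- `|f| = f` if `f ≥ 0` and `|f| = -f` otherwise, in `ℤ^X`. -/
noncomputable def zabs {X : Type*} [LinearOrder X] (f : X →₀ ℤ) : X →₀ ℤ :=
  if ZLE 0 f then f else -f

/-- `f` is Archimedean less than `g` in `ℤ^X`: `|n·f| < |g|` for every natural `n`. -/
def ZArchLT {X : Type*} [LinearOrder X] (f g : X →₀ ℤ) : Prop :=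
  ∀ n : ℕ, ZLT (zabs (n • f)) (zabs g)

/-- `f` and `g` are Archimedean equivalent in `ℤ^X`: there are `n, m` with
`|n·f| ≥ |g|` and `|m·g| ≥ |f|`. -/
def ZArchEquiv {X : Type*} [LinearOrder X] (f g : X →₀ ℤ) : Prop :=
  ∃ n m : ℕ, ZLE (zabs g) (zabs (n • f)) ∧ ZLE (zabs f) (zabs (m • g))

section helpers
variable {X : Type*} [LinearOrder X]

lemma zle_zero_iff {h : X →₀ ℤ} {p : X} (hp : h p ≠ 0) (hp' : ∀ y, p < y → h y = 0) :
    ZLE 0 h ↔ 0 < h p := by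
  constructor
  · rintro (⟨x, hx1, hx2⟩ | he)
    · simp only [Finsupp.coe_zero, Pi.zero_apply] at hx1 hx2
      rcases lt_trichotomy x p with h1 | h1 | h1
      · exact absurd (hx2 p h1).symm hp
      · rwa [h1] at hx1
      · rw [hp' x h1] at hx1; exact absurd hx1 (lt_irrefl 0)
    · rw [← he] at hp; simp at hp
  · intro hpos
    exact Or.inl ⟨p, by simpa using hpos, fun y hy => by simp [hp' y hy]⟩

lemma zabs_spec {h : X →₀ ℤ} {p : X} (hp : h p ≠ 0) (hp' : ∀ y, p < y → h y = 0) :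
    0 < zabs h p ∧ (∀ y, p < y → zabs h y = 0) ∧ ∀ x, (zabs h x = 0 ↔ h x = 0) := by
  unfold zabs
  rw [zle_zero_iff hp hp']
  split_ifs with hpos
  · exact ⟨hpos, hp', fun x => Iff.rfl⟩
  · push_neg at hpos
    have hplt : h p < 0 := lt_of_le_of_ne hpos hp
    refine ⟨by simpa using hplt, fun y hy => by simp [hp' y hy], fun x => by simp⟩

lemma zabs_cases (h : X →₀ ℤ) : zabs h = h ∨ zabs h = -h := by
  unfold zabs; split_ifs <;> simp

lemma zabs_zero : zabs (0 : X →₀ ℤ) = 0 := by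
  unfold zabs; split_ifs <;> simp

lemma zlt_lead' {a b : X →₀ ℤ} {p q : X} (hpa : 0 < a p) (hpa' : ∀ y, p < y → a y = 0)
    (hpb : 0 < b q) (hpb' : ∀ y, q < y → b y = 0) (hlt : ZLT a b) :
    p < q ∨ (p = q ∧ a p ≤ b q) := by
  obtain ⟨x, hx1, hx2⟩ := hlt
  rcases lt_trichotomy p q with h1 | h1 | h1
  · exact Or.inl h1
  · refine Or.inr ⟨h1, ?_⟩
    rcases lt_trichotomy x p with h2 | h2 | h2
    · rw [hx2 p h2, h1]
    · subst h2; subst h1; exact le_of_lt hx1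
    · rw [hpa' x h2, hpb' x (h1 ▸ h2)] at hx1; exact absurd hx1 (lt_irrefl 0)
  · exfalso
    have hbp : b p = 0 := hpb' p h1
    have hne : a p ≠ b p := by rw [hbp]; exact ne_of_gt hpa
    have hxp : ¬ x < p := fun hc => hne (hx2 p hc)
    push_neg at hxp
    have hbx : b x = 0 := hpb' x (lt_of_lt_of_le h1 hxp)
    have hax : a x < 0 := hbx ▸ hx1
    rcases lt_or_eq_of_le hxp with h2 | h2
    · rw [hpa' x h2] at hax; exact absurd hax (lt_irrefl 0)
    · subst h2; exact absurd (hpa.trans hax) (lt_irrefl 0)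

lemma key_smul {f : X →₀ ℤ} {mf : X} (hfmf : f mf ≠ 0) (hfup : ∀ y, mf < y → f y = 0)
    (n : ℕ) (hn : 0 < n) :
    0 < zabs (n • f) mf ∧ (∀ y, mf < y → zabs (n • f) y = 0) ∧ (n : ℤ) ≤ zabs (n • f) mf := by
  have hs : ∀ x, (n • f) x = (n : ℤ) * f x := fun x => by
    rw [Finsupp.smul_apply, nsmul_eq_mul]
  have hncast : (0 : ℤ) < (n : ℤ) := Int.natCast_pos.mpr hn
  have hp : (n • f) mf ≠ 0 := by rw [hs]; exact mul_ne_zero (ne_of_gt hncast) hfmf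
  have hp' : ∀ y, mf < y → (n • f) y = 0 := fun y hy => by rw [hs, hfup y hy, mul_zero]
  obtain ⟨s1, s2, s3⟩ := zabs_spec hp hp'
  refine ⟨s1, s2, ?_⟩
  have hb : zabs (n • f) mf = (n : ℤ) * f mf ∨ zabs (n • f) mf = -((n : ℤ) * f mf) := by
    rcases zabs_cases (n • f) with hc | hc
    · left; rw [hc, hs]
    · right; rw [hc, Finsupp.neg_apply, hs]
  have hfm : f mf ≤ -1 ∨ 1 ≤ f mf := by omega
  rcases hb with hb | hb <;> rw [hb] at s1 ⊢ <;> rcases hfm with hfm | hfm <;> nlinarith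

lemma aux_le {f g : X →₀ ℤ} {mf mg : X} (hfmf : f mf ≠ 0) (hfup : ∀ y, mf < y → f y = 0)
    (hgmg : g mg ≠ 0) (hgup : ∀ y, mg < y → g y = 0) {n : ℕ}
    (h1 : ZLE (zabs g) (zabs (n • f))) : mg ≤ mf := by
  obtain ⟨g1, g2, g3⟩ := zabs_spec hgmg hgup
  rcases Nat.eq_zero_or_pos n with hn | hn
  · exfalso
    subst hn
    rw [zero_smul, zabs_zero] at h1
    rcases h1 with ⟨x, hx1, hx2⟩ | he
    · simp only [Finsupp.coe_zero, Pi.zero_apply] at hx1 hx2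
      rcases lt_trichotomy x mg with h2 | h2 | h2
      · exact absurd (hx2 mg h2) (ne_of_gt g1)
      · subst h2; exact absurd (g1.trans hx1) (lt_irrefl 0)
      · rw [g2 x h2] at hx1; exact absurd hx1 (lt_irrefl 0)
    · rw [he] at g1; simp at g1
  · obtain ⟨k1, k2, k3⟩ := key_smul hfmf hfup n hn
    rcases h1 with hlt | he
    · rcases zlt_lead' g1 g2 k1 k2 hlt with h | ⟨h, _⟩
      · exact le_of_lt h
      · exact le_of_eq h
    · by_contra hc
      push_neg at hc
      have : zabs (n • f) mg = 0 := k2 mg hc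
      rw [← he] at this
      exact absurd this (ne_of_gt g1)

end helpers

/-- In the standard ordered abelian group `ℤ^X`, for nonzero `f, g`:
`f ≪ g` iff `max (supp f) < max (supp g)`, and `f ≈ g` iff
`max (supp f) = max (supp g)`. -/
theorem zpow_archLT_iff_max_support_lt
    {X : Type*} [LinearOrder X] (f g : X →₀ ℤ) (hf : f ≠ 0) (hg : g ≠ 0) :
    (ZArchLT f g ↔
      f.support.max' (Finsupp.support_nonempty_iff.mpr hf) <
        g.support.max' (Finsupp.support_nonempty_iff.mpr hg)) ∧
    (ZArchEquiv f g ↔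
      f.support.max' (Finsupp.support_nonempty_iff.mpr hf) =
        g.support.max' (Finsupp.support_nonempty_iff.mpr hg)) := by
  set mf := f.support.max' (Finsupp.support_nonempty_iff.mpr hf) with hmf
  set mg := g.support.max' (Finsupp.support_nonempty_iff.mpr hg) with hmg
  have hfmf : f mf ≠ 0 := Finsupp.mem_support_iff.mp (f.support.max'_mem _)
  have hgmg : g mg ≠ 0 := Finsupp.mem_support_iff.mp (g.support.max'_mem _)
  have hfup : ∀ y, mf < y → f y = 0 := fun y hy => by
    by_contra hc
    exact absurd (Finset.le_max' _ y (Finsupp.mem_support_iff.mpr hc)) (not_le.mpr hy)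
  have hgup : ∀ y, mg < y → g y = 0 := fun y hy => by
    by_contra hc
    exact absurd (Finset.le_max' _ y (Finsupp.mem_support_iff.mpr hc)) (not_le.mpr hy)
  obtain ⟨g1, g2, g3⟩ := zabs_spec hgmg hgup
  obtain ⟨f1, f2, f3⟩ := zabs_spec hfmf hfup
  constructor
  · constructor
    · intro hA
      by_contra hc
      push_neg at hc
      set n : ℕ := (zabs g mg).toNat + 1 with hn
      obtain ⟨k1, k2, k3⟩ := key_smul hfmf hfup n (Nat.succ_pos _)
      rcases zlt_lead' k1 k2 g1 g2 (hA n) with h | ⟨h, hle⟩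
      · exact absurd h (not_lt.mpr hc)
      · have : (↑((zabs g mg).toNat + 1) : ℤ) ≤ zabs g mg := le_trans k3 hle
        omega
    · intro hlt n
      have hup : ∀ y, mf < y → zabs (n • f) y = 0 := by
        rcases Nat.eq_zero_or_pos n with hn | hn
        · subst hn; rw [zero_smul, zabs_zero]; intro y _; simp
        · exact (key_smul hfmf hfup n hn).2.1
      exact ⟨mg, by rw [hup mg hlt]; exact g1,
        fun y hy => by rw [hup y (hlt.trans hy), g2 y hy]⟩
  · constructor
    · rintro ⟨n, m, h1, h2⟩
      exact le_antisymm (aux_le hgmg hgup hfmf hfup h2) (aux_le hfmf hfup hgmg hgup h1)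
    · intro heq
      refine ⟨(zabs g mg).toNat + 1, (zabs f mf).toNat + 1, ?_, ?_⟩
      · obtain ⟨k1, k2, k3⟩ := key_smul hfmf hfup ((zabs g mg).toNat + 1) (Nat.succ_pos _)
        rw [heq] at k2 k3
        refine Or.inl ⟨mg, ?_, fun y hy => by rw [g2 y hy, k2 y hy]⟩
        have : zabs g mg < (↑((zabs g mg).toNat + 1) : ℤ) := by omega
        exact lt_of_lt_of_le this k3
      · obtain ⟨k1, k2, k3⟩ := key_smul hgmg hgup ((zabs f mf).toNat + 1) (Nat.succ_pos _)
        rw [← heq] at k2 k3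
        refine Or.inl ⟨mf, ?_, fun y hy => by rw [f2 y hy, k2 y hy]⟩
        have : zabs f mf < (↑((zabs f mf).toNat + 1) : ℤ) := by omega
        exact lt_of_lt_of_le this k3
end

section
/- Let X be a linear order such that ℚ order-embeds into X. Then ℚ order-embeds into ℤ^X (the finitely supported functions from X to ℤ with the maximum-disagreement order). -/
/-- If `ℚ` order-embeds into a linear order `X`, then `ℚ` order-embeds into `ℤ^X`
(finitely supported functions `X → ℤ` with the maximum-disagreement order). -/
theorem rat_embeds_zpow_of_rat_embeds
    {X : Type*} [LinearOrder X]
    (h : ∃ f : ℚ → X, ∀ a b : ℚ, a < b ↔ f a < f b) :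
    ∃ g : ℚ → (X →₀ ℤ),
      ∀ a b : ℚ, a < b ↔ FinsuppLT ((· < ·) : X → X → Prop) (g a) (g b) := by
  obtain ⟨f, hf⟩ := h
  refine ⟨fun q => Finsupp.single (f q) 1, fun a b => ?_⟩
  constructor
  · intro hab
    have hne : f a ≠ f b := fun e => absurd ((hf a b).mp hab) (by simp [e])
    refine ⟨f b, ?_, fun y hy => ?_⟩
    · simp [Finsupp.single_apply, hne]
    · have h1 : f a ≠ y := by
        rintro rfl
        exact absurd hy (not_lt.mpr ((hf a b).mp hab).le)
      have h2 : f b ≠ y := fun e => absurd hy (by simp [e])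
      simp [Finsupp.single_apply, h1, h2]
  · rintro ⟨x, hx, hall⟩
    dsimp only at hx hall
    have hne : f a ≠ f b := by
      rintro e
      rw [e] at hx
      exact lt_irrefl _ hx
    have hxb : x = f b := by
      by_contra hxb
      have : (Finsupp.single (f b) (1:ℤ)) x = 0 := by
        simp [Finsupp.single_apply, Ne.symm hxb]
      rw [this] at hx
      have : (Finsupp.single (f a) (1:ℤ)) x = 0 ∨ (Finsupp.single (f a) (1:ℤ)) x = 1 := by
        by_cases h' : f a = x <;> simp [Finsupp.single_apply, h']
      rcases this with h' | h' <;> omega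
    subst hxb
    have hle : f a < f b := by
      rcases lt_trichotomy (f a) (f b) with h' | h' | h'
      · exact h'
      · exact absurd h' hne
      · have := hall (f a) h'
        simp [Finsupp.single_apply, hne, Ne.symm hne] at this
    exact (hf a b).mpr hle
end
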